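/- Let M ∈ ℝ^{N×d} have full column rank d, let c ∈ ℝ^N, let ε₀ > 0, ε ≥ 0, δ ≥ 0, and let S, Σ̄ ∈ ℝ^{N×N} be symmetric positive definite with Σ̄ − S positive semidefinite. Assume that for all d₁, d₂ ∈ ℝ^d with 0 < ‖d₁ − d₂‖ ≤ ε₀ one has Q(ε/‖M(d₁−d₂)‖_{S⁻¹} − ‖M(d₁−d₂)‖_{S⁻¹}/2) ≤ δ. Then for all d₁, d₂ ∈ ℝ^d with ‖d₁ − d₂‖ ≤ ε₀ and every Borel set T ⊆ ℝ^N, N(M d₁ + c, Σ̄)(T) ≤ e^ε · N(M d₂ + c, Σ̄)(T) + δ. -/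

import Mathlib

open MeasureTheory Matrix

/-- Density of the multivariate Gaussian `N(m, S)` on `ℝ^N`. -/
noncomputable def gaussianPdf {N : ℕ} (m : Fin N → ℝ) (S : Matrix (Fin N) (Fin N) ℝ)
    (u : Fin N → ℝ) : ℝ :=
  (Real.sqrt ((2 * Real.pi) ^ N * S.det))⁻¹ *
    Real.exp (-(1 / 2) * ((u - m) ⬝ᵥ S⁻¹ *ᵥ (u - m)))

/-- The multivariate Gaussian measure `N(m, S)` on `ℝ^N`. -/
noncomputable def gaussianMeasure {N : ℕ} (m : Fin N → ℝ) (S : Matrix (Fin N) (Fin N) ℝ) :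
    Measure (Fin N → ℝ) :=
  volume.withDensity fun u => ENNReal.ofReal (gaussianPdf m S u)

/-- The Gaussian tail function `Q(x) = (1/√(2π)) ∫_x^∞ exp(-z²/2) dz`. -/
noncomputable def gaussQ (x : ℝ) : ℝ :=
  (Real.sqrt (2 * Real.pi))⁻¹ * ∫ z in Set.Ioi x, Real.exp (-z ^ 2 / 2)

/-- The weighted norm `‖μ‖_A = √(μᵀ A μ)`. -/
noncomputable def wnorm {N : ℕ} (A : Matrix (Fin N) (Fin N) ℝ) (μ : Fin N → ℝ) : ℝ :=
  Real.sqrt (μ ⬝ᵥ A *ᵥ μ)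


lemma integrable_gauss1d : Integrable (fun z : ℝ => Real.exp (-z ^ 2 / 2)) := by
  have h : (fun z : ℝ => Real.exp (-z ^ 2 / 2)) = fun z => Real.exp (-(2⁻¹ : ℝ) * z ^ 2) := by
    funext z; ring_nf
  rw [h]
  exact integrable_exp_neg_mul_sq (by norm_num)

lemma integral_gauss1d : ∫ z : ℝ, Real.exp (-z ^ 2 / 2) = Real.sqrt (2 * Real.pi) := by
  have h : (fun z : ℝ => Real.exp (-z ^ 2 / 2)) = fun z => Real.exp (-(2⁻¹ : ℝ) * z ^ 2) := by
    funext z; ring_nf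
  rw [h, integral_gaussian]
  norm_num [mul_comm]

lemma measurable_mulVecPi {N d : ℕ} (C : Matrix (Fin N) (Fin d) ℝ) :
    Measurable fun x : Fin d → ℝ => C *ᵥ x := by
  apply measurable_pi_lambda
  intro i
  simp only [Matrix.mulVec, dotProduct]
  exact Finset.measurable_sum _ fun j _ => (measurable_pi_apply j).const_mul _

lemma measurable_linform {N : ℕ} (w m : Fin N → ℝ) :
    Measurable fun u : Fin N → ℝ => w ⬝ᵥ (u - m) := by
  simp only [dotProduct]
  apply Finset.measurable_sum
  intro j _
  exact (((measurable_pi_apply j).sub measurable_const).const_mul _)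

lemma measurable_gaussianPdf {N : ℕ} (m : Fin N → ℝ) (S : Matrix (Fin N) (Fin N) ℝ) :
    Measurable (gaussianPdf m S) := by
  unfold gaussianPdf
  apply Measurable.const_mul
  apply Real.measurable_exp.comp
  apply Measurable.const_mul
  simp only [dotProduct, Matrix.mulVec]
  apply Finset.measurable_sum
  intro i _
  apply Measurable.mul
  · exact (measurable_pi_apply i).sub measurable_const
  · apply Finset.measurable_sum
    intro j _
    exact ((measurable_pi_apply j).sub measurable_const).const_mul _


lemma transpose_eq_of_hermitian {N : ℕ} {S : Matrix (Fin N) (Fin N) ℝ}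
    (h : S.IsHermitian) : Sᵀ = S := by
  simpa [Matrix.IsHermitian, Matrix.conjTranspose_eq_transpose_of_trivial] using h

open scoped MatrixOrder

lemma exists_transport {N : ℕ} (hN : 0 < N) {A : Matrix (Fin N) (Fin N) ℝ} (hA : A.PosDef)
    {w : Fin N → ℝ} (hw : w ≠ 0) :
    ∃ C : Matrix (Fin N) (Fin N) ℝ,
      (Cᵀ * A⁻¹ * C = 1) ∧ |C.det| = Real.sqrt A.det ∧
      (∀ x, w ⬝ᵥ (C *ᵥ x) = Real.sqrt (w ⬝ᵥ A *ᵥ w) * x ⟨0, hN⟩) := by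
  classical
  set R := CFC.sqrt A with hRdef
  have hRps : R.PosSemidef := (CFC.sqrt_nonneg A).posSemidef
  have hRT : Rᵀ = R := transpose_eq_of_hermitian hRps.1
  have hRR : R * R = A := CFC.sqrt_mul_sqrt_self A hA.posSemidef.nonneg
  have hdetA : 0 < A.det := hA.det_pos
  have hdetR : 0 < R.det := by
    have hnn : 0 ≤ R.det := by
      rw [hRps.1.det_eq_prod_eigenvalues]
      simpa using Finset.prod_nonneg fun i (_ : i ∈ Finset.univ) => hRps.eigenvalues_nonneg i
    rcases lt_or_eq_of_le hnn with h | h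
    · exact h
    · exfalso
      have hd : R.det * R.det = A.det := by rw [← Matrix.det_mul, hRR]
      rw [← h] at hd; simp at hd; linarith
  have hdetRsqrt : R.det = Real.sqrt A.det := by
    have : R.det * R.det = A.det := by rw [← Matrix.det_mul, hRR]
    rw [← this, Real.sqrt_mul_self hdetR.le]
  have hRdet_unit : IsUnit R.det := hdetR.ne'.isUnit
  -- quadratic form positivity
  have hwa : 0 < w ⬝ᵥ A *ᵥ w := by
    have := hA.dotProduct_mulVec_pos hw; simpa using this
  set a := Real.sqrt (w ⬝ᵥ A *ᵥ w) with hadef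
  have ha : 0 < a := Real.sqrt_pos.mpr hwa
  have ha2 : a * a = w ⬝ᵥ A *ᵥ w := Real.mul_self_sqrt hwa.le
  set y := R *ᵥ w with hydef
  have hyy : y ⬝ᵥ y = w ⬝ᵥ A *ᵥ w := by
    calc y ⬝ᵥ y = y ⬝ᵥ (R *ᵥ w) := rfl
    _ = (y ᵥ* R) ⬝ᵥ w := (Matrix.dotProduct_mulVec _ _ _)
    _ = (R *ᵥ y) ⬝ᵥ w := by
          rw [show (y ᵥ* R) = R *ᵥ y from by rw [← Matrix.vecMul_transpose, hRT]]
    _ = ((R * R) *ᵥ w) ⬝ᵥ w := by rw [hydef, Matrix.mulVec_mulVec]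
    _ = (A *ᵥ w) ⬝ᵥ w := by rw [hRR]
    _ = w ⬝ᵥ A *ᵥ w := dotProduct_comm _ _
  -- build orthonormal basis of EuclideanSpace with b 0 = a⁻¹ • y
  set u₀ : EuclideanSpace ℝ (Fin N) := WithLp.toLp 2 (fun i => a⁻¹ * y i) with hu₀
  have hnorm : ‖u₀‖ = 1 := by
    rw [EuclideanSpace.norm_eq]
    have : ∑ i, ‖u₀ i‖ ^ 2 = a⁻¹ * a⁻¹ * (y ⬝ᵥ y) := by
      rw [dotProduct, Finset.mul_sum]
      congr 1; funext i
      simp only [hu₀, Real.norm_eq_abs, abs_mul, abs_inv, abs_of_pos ha, mul_pow, sq_abs]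
      ring
    rw [this, hyy, ← ha2]
    rw [show a⁻¹ * a⁻¹ * (a * a) = 1 by field_simp]
    exact Real.sqrt_one
  obtain ⟨b, hb0⟩ := Orthonormal.exists_orthonormalBasis_extension_of_card_eq
    (𝕜 := ℝ) (E := EuclideanSpace ℝ (Fin N)) (ι := Fin N)
    (by simp) (v := fun _ => u₀) (s := {⟨0, hN⟩})
    (by
      constructor
      · rintro ⟨i, hi⟩; simpa using hnorm
      · rintro ⟨i, hi⟩ ⟨j, hj⟩ hij
        exfalso; apply hij
        simp only [Set.mem_singleton_iff] at hi hj
        exact Subtype.ext (hi.trans hj.symm))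
  have hb0' : b ⟨0, hN⟩ = u₀ := hb0 _ rfl
  set O : Matrix (Fin N) (Fin N) ℝ := Matrix.of (fun i j => b j i) with hO
  have horth := b.orthonormal
  have hinner : ∀ i j, (∑ k, b i k * b j k) = if i = j then 1 else 0 := by
    intro i j
    have := orthonormal_iff_ite.mp horth i j
    rw [PiLp.inner_apply] at this
    simpa [RCLike.inner_apply, starRingEnd_apply, mul_comm] using this
  have hOtO : Oᵀ * O = 1 := by
    ext i j
    simp only [Matrix.mul_apply, Matrix.transpose_apply, hO, Matrix.of_apply]
    rw [hinner i j]
    simp [Matrix.one_apply]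
  have hdetO : |O.det| = 1 := by
    have h1 : O.det * O.det = 1 := by
      have := congrArg Matrix.det hOtO
      rwa [Matrix.det_mul, Matrix.det_transpose, Matrix.det_one] at this
    rcases mul_self_eq_one_iff.mp h1 with h | h <;> simp [h]
  refine ⟨R * O, ?_, ?_, ?_⟩
  · -- (R*O)ᵀ * A⁻¹ * (R*O) = 1
    have hAinv : A⁻¹ = R⁻¹ * R⁻¹ := by rw [← hRR, Matrix.mul_inv_rev]
    rw [Matrix.transpose_mul, hRT, hAinv]
    calc Oᵀ * R * (R⁻¹ * R⁻¹) * (R * O)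
        = Oᵀ * ((R * R⁻¹) * (R⁻¹ * R)) * O := by noncomm_ring
      _ = Oᵀ * O := by
          rw [Matrix.mul_nonsing_inv _ hRdet_unit, Matrix.nonsing_inv_mul _ hRdet_unit]
          noncomm_ring
      _ = 1 := hOtO
  · rw [Matrix.det_mul, abs_mul, hdetO, mul_one, abs_of_pos hdetR, hdetRsqrt]
  · intro x
    have hyb : ∀ i, y i = a * b ⟨0, hN⟩ i := by
      intro i; rw [hb0']; simp [hu₀]; field_simp
    calc w ⬝ᵥ ((R * O) *ᵥ x) = (w ᵥ* (R * O)) ⬝ᵥ x := Matrix.dotProduct_mulVec _ _ _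
      _ = ((w ᵥ* R) ᵥ* O) ⬝ᵥ x := by rw [Matrix.vecMul_vecMul]
      _ = (y ᵥ* O) ⬝ᵥ x := by
          rw [show (w ᵥ* R) = R *ᵥ w from by rw [← Matrix.vecMul_transpose, hRT], hydef]
      _ = a * x ⟨0, hN⟩ := by
          have : ∀ j, (y ᵥ* O) j = a * (if ⟨0, hN⟩ = j then 1 else 0) := by
            intro j
            rw [Matrix.vecMul, dotProduct]
            calc ∑ i, y i * O i j = a * ∑ i, b ⟨0, hN⟩ i * b j i := by
                  rw [Finset.mul_sum]; congr 1; funext i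
                  rw [hyb i, hO]; simp [Matrix.of_apply]; ring
              _ = a * (if ⟨0, hN⟩ = j then 1 else 0) := by rw [hinner]
          rw [dotProduct]
          rw [Finset.sum_congr rfl (fun j _ => by rw [this j])]
          rw [Finset.sum_eq_single (⟨0, hN⟩ : Fin N)]
          · simp
          · intro j _ hj; simp [Ne.symm hj]
          · intro h; simp at h

lemma sqrt_pow' (x : ℝ) (hx : 0 ≤ x) (n : ℕ) : Real.sqrt (x ^ n) = Real.sqrt x ^ n := by
  induction n with
  | zero => simp
  | succ n ih => rw [pow_succ, pow_succ, Real.sqrt_mul (pow_nonneg hx n), ih]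

lemma halfspace_lintegral {N : ℕ} (m : Fin N → ℝ) {A : Matrix (Fin N) (Fin N) ℝ} (hA : A.PosDef)
    {w : Fin N → ℝ} (hw : w ≠ 0) (t : ℝ) :
    ∫⁻ u, Set.indicator {u | t < w ⬝ᵥ (u - m)}
        (fun u => ENNReal.ofReal (gaussianPdf m A u)) u
      = ENNReal.ofReal (gaussQ (t / Real.sqrt (w ⬝ᵥ A *ᵥ w))) := by
  classical
  have hN : 0 < N := by
    rcases Nat.eq_zero_or_pos N with h | h
    · exfalso; apply hw; subst h; funext i; exact i.elim0
    · exact h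
  have hwa : 0 < w ⬝ᵥ A *ᵥ w := by have := hA.dotProduct_mulVec_pos hw; simpa using this
  set a := Real.sqrt (w ⬝ᵥ A *ᵥ w) with hadef
  have ha : 0 < a := Real.sqrt_pos.mpr hwa
  obtain ⟨C, hC1, hCdet, hCw⟩ := exists_transport hN hA hw
  have hdetA : 0 < A.det := hA.det_pos
  have hCdetpos : 0 < |C.det| := by rw [hCdet]; exact Real.sqrt_pos.mpr hdetA
  have hdetC_ne : C.det ≠ 0 := by
    intro h; rw [h] at hCdetpos; simp at hCdetpos
  set i0 : Fin N := ⟨0, hN⟩ with hi0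
  set g : ℝ → ℝ := fun z => Real.exp (-z ^ 2 / 2) with hg
  set f : Fin N → ℝ → ℝ :=
    fun i => if i = i0 then Set.indicator (Set.Ioi (t / a)) g else g with hf
  set K : ℝ := (Real.sqrt ((2 * Real.pi) ^ N * A.det))⁻¹ with hK
  have hKnn : 0 ≤ K := inv_nonneg.mpr (Real.sqrt_nonneg _)
  set F : (Fin N → ℝ) → ENNReal :=
    Set.indicator {u | t < w ⬝ᵥ (u - m)} (fun u => ENNReal.ofReal (gaussianPdf m A u)) with hF
  have hFmeas : Measurable F := by
    apply Measurable.indicator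
    · exact (measurable_gaussianPdf m A).ennreal_ofReal
    · exact measurableSet_lt measurable_const (measurable_linform w m)
  have hlin : Measurable fun x : Fin N → ℝ => C *ᵥ x := measurable_mulVecPi C
  have hφ : Measurable fun x : Fin N → ℝ => m + C *ᵥ x := measurable_const.add hlin
  have hmap : Measure.map (fun x : Fin N → ℝ => m + C *ᵥ x) volume
      = ENNReal.ofReal |C.det|⁻¹ • volume := by
    have h1 : Measure.map (Matrix.toLin' C) volume = ENNReal.ofReal |C.det|⁻¹ • volume := by
      have := Real.map_matrix_volume_pi_eq_smul_volume_pi hdetC_ne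
      rwa [abs_inv] at this
    have h2 : (fun x : Fin N → ℝ => m + C *ᵥ x)
        = (fun y => m + y) ∘ (Matrix.toLin' C) := by
      funext x; simp [Matrix.toLin'_apply]
    have hlin' : Measurable (Matrix.toLin' C) := by
      exact (Matrix.toLin' C).continuous_of_finiteDimensional.measurable
    rw [h2, ← Measure.map_map (measurable_const_add m) hlin']
    rw [h1, Measure.map_smul, map_add_left_eq_self]
  have hvol : (volume : Measure (Fin N → ℝ))
      = ENNReal.ofReal |C.det| • Measure.map (fun x : Fin N → ℝ => m + C *ᵥ x) volume := by
    rw [hmap, smul_smul, ← ENNReal.ofReal_mul (abs_nonneg _),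
      mul_inv_cancel₀ (ne_of_gt hCdetpos), ENNReal.ofReal_one, one_smul]
  have hCoV : ∫⁻ u, F u = ENNReal.ofReal |C.det| * ∫⁻ x, F (m + C *ᵥ x) := by
    conv_lhs => rw [hvol]
    rw [lintegral_smul_measure, lintegral_map hFmeas hφ, smul_eq_mul]
  have hpoint : ∀ x : Fin N → ℝ,
      F (m + C *ᵥ x) = ENNReal.ofReal (K * ∏ i, f i (x i)) := by
    intro x
    have hsub : (m + C *ᵥ x) - m = C *ᵥ x := add_sub_cancel_left m _
    have hquad : (C *ᵥ x) ⬝ᵥ A⁻¹ *ᵥ (C *ᵥ x) = x ⬝ᵥ x := by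
      calc (C *ᵥ x) ⬝ᵥ A⁻¹ *ᵥ (C *ᵥ x) = ((C *ᵥ x) ᵥ* A⁻¹) ⬝ᵥ (C *ᵥ x) :=
            Matrix.dotProduct_mulVec _ _ _
        _ = ((x ᵥ* Cᵀ) ᵥ* A⁻¹) ⬝ᵥ (C *ᵥ x) := by rw [Matrix.vecMul_transpose]
        _ = (x ᵥ* (Cᵀ * A⁻¹)) ⬝ᵥ (C *ᵥ x) := by rw [Matrix.vecMul_vecMul]
        _ = ((x ᵥ* (Cᵀ * A⁻¹)) ᵥ* C) ⬝ᵥ x := Matrix.dotProduct_mulVec _ _ _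
        _ = (x ᵥ* (Cᵀ * A⁻¹ * C)) ⬝ᵥ x := by rw [Matrix.vecMul_vecMul]
        _ = x ⬝ᵥ x := by rw [hC1, Matrix.vecMul_one]
    have hpdf : gaussianPdf m A (m + C *ᵥ x) = K * ∏ i, g (x i) := by
      unfold gaussianPdf
      rw [hsub, hquad, ← hK]
      congr 1
      have hsum : -(1 / 2 : ℝ) * (x ⬝ᵥ x) = ∑ i, -(x i) ^ 2 / 2 := by
        rw [dotProduct, Finset.mul_sum]
        exact Finset.sum_congr rfl fun i _ => by ring
      rw [hsum, Real.exp_sum]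
    by_cases hmem : x i0 ∈ Set.Ioi (t / a)
    · have hcond : (m + C *ᵥ x) ∈ {u | t < w ⬝ᵥ (u - m)} := by
        have h1 : t / a < x i0 := hmem
        have h2 : t < a * x i0 := by
          rw [div_lt_iff₀ ha] at h1; linarith
        show t < w ⬝ᵥ ((m + C *ᵥ x) - m)
        rw [hsub, hCw x]
        exact h2
      rw [hF, Set.indicator_of_mem hcond, hpdf]
      congr 1
      congr 1
      refine (Finset.prod_congr rfl fun i _ => ?_).symm
      rw [hf]
      by_cases hi : i = i0
      · subst hi
        simp [Set.indicator_of_mem hmem]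
      · simp only [if_neg hi]
    · have hcond : (m + C *ᵥ x) ∉ {u | t < w ⬝ᵥ (u - m)} := by
        intro hc
        have h2 : t < a * x i0 := by
          have := hc
          simp only [Set.mem_setOf_eq] at this
          rwa [hsub, hCw x] at this
        apply hmem
        rw [Set.mem_Ioi, div_lt_iff₀ ha]
        linarith
      rw [hF, Set.indicator_of_notMem hcond]
      have hzero : (∏ i, f i (x i)) = 0 := by
        apply Finset.prod_eq_zero (Finset.mem_univ i0)
        rw [hf]
        simp [Set.indicator_of_notMem hmem]
      rw [hzero, mul_zero, ENNReal.ofReal_zero]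
  have hginteg : Integrable g := integrable_gauss1d
  have hint : ∀ i, Integrable (f i) := by
    intro i; rw [hf]
    by_cases hi : i = i0
    · subst hi
      simpa using hginteg.indicator (measurableSet_Ioi (a := t / a))
    · simp only [if_neg hi]; exact hginteg
  have hP_int : Integrable (fun x : Fin N → ℝ => ∏ i, f i (x i)) :=
    Integrable.fintype_prod_dep hint
  have hgnn : ∀ z, 0 ≤ g z := fun z => (Real.exp_pos _).le
  have hPnn : ∀ x : Fin N → ℝ, 0 ≤ ∏ i, f i (x i) := by
    intro x
    apply Finset.prod_nonneg
    intro i _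
    rw [hf]
    by_cases hi : i = i0
    · subst hi; simp only [if_pos rfl]
      exact Set.indicator_nonneg (fun z _ => hgnn z) _
    · simp only [if_neg hi]; exact hgnn _
  have hs2π : (0:ℝ) < Real.sqrt (2 * Real.pi) :=
    Real.sqrt_pos.mpr (by positivity)
  have h0 : ∫ z, f i0 z = Real.sqrt (2 * Real.pi) * gaussQ (t / a) := by
    rw [hf]
    simp only [if_pos rfl, eq_self_iff_true, if_true]
    rw [integral_indicator measurableSet_Ioi]
    rw [gaussQ, ← mul_assoc, mul_inv_cancel₀ (ne_of_gt hs2π), one_mul]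
  have hother : ∀ i, i ≠ i0 → ∫ z, f i z = Real.sqrt (2 * Real.pi) := by
    intro i hi
    rw [hf]; simp only [if_neg hi]
    exact integral_gauss1d
  have hprod : (∏ i, ∫ z, f i z)
      = (Real.sqrt (2 * Real.pi) * gaussQ (t / a)) * Real.sqrt (2 * Real.pi) ^ (N - 1) := by
    rw [← Finset.mul_prod_erase Finset.univ _ (Finset.mem_univ i0), h0]
    congr 1
    rw [Finset.prod_congr rfl (fun i hi => hother i (Finset.ne_of_mem_erase hi))]
    rw [Finset.prod_const, Finset.card_erase_of_mem (Finset.mem_univ _),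
      Finset.card_univ, Fintype.card_fin]
  calc ∫⁻ u, F u
      = ENNReal.ofReal |C.det| * ∫⁻ x : Fin N → ℝ, ENNReal.ofReal (K * ∏ i, f i (x i)) := by
        rw [hCoV]; congr 1; exact lintegral_congr fun x => hpoint x
    _ = ENNReal.ofReal |C.det| *
        (ENNReal.ofReal K * ∫⁻ x : Fin N → ℝ, ENNReal.ofReal (∏ i, f i (x i))) := by
        congr 1
        simp only [ENNReal.ofReal_mul hKnn]
        rw [lintegral_const_mul' _ _ ENNReal.ofReal_ne_top]
    _ = ENNReal.ofReal |C.det| *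
        (ENNReal.ofReal K * ENNReal.ofReal (∫ x : Fin N → ℝ, ∏ i, f i (x i))) := by
        rw [← ofReal_integral_eq_lintegral_ofReal hP_int (Filter.Eventually.of_forall hPnn)]
    _ = ENNReal.ofReal (|C.det| * (K * ∫ x : Fin N → ℝ, ∏ i, f i (x i))) := by
        rw [ENNReal.ofReal_mul (abs_nonneg _), ENNReal.ofReal_mul hKnn]
    _ = ENNReal.ofReal (gaussQ (t / a)) := by
        congr 1
        rw [MeasureTheory.integral_fintype_prod_volume_eq_prod (𝕜 := ℝ) f, hprod]
        rw [hCdet, hK]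
        have hsplit : Real.sqrt ((2 * Real.pi) ^ N * A.det)
            = Real.sqrt (2 * Real.pi) ^ N * Real.sqrt A.det := by
          rw [Real.sqrt_mul (pow_nonneg (by positivity) _), sqrt_pow' _ (by positivity)]
        rw [hsplit]
        have hpow : Real.sqrt (2 * Real.pi) ^ N
            = Real.sqrt (2 * Real.pi) * Real.sqrt (2 * Real.pi) ^ (N - 1) := by
          conv_lhs => rw [show N = (N - 1) + 1 from (Nat.succ_pred_eq_of_pos hN).symm]
          rw [pow_succ]; ring
        rw [hpow]
        have hsA : (0:ℝ) < Real.sqrt A.det := Real.sqrt_pos.mpr hdetA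
        field_simp

lemma dot_mulVec_symm {N : ℕ} {S : Matrix (Fin N) (Fin N) ℝ}
    (h : S.IsHermitian) (x y : Fin N → ℝ) : y ⬝ᵥ S *ᵥ x = x ⬝ᵥ S *ᵥ y := by
  rw [Matrix.dotProduct_mulVec, ← Matrix.mulVec_transpose, transpose_eq_of_hermitian h]
  exact dotProduct_comm _ _

lemma cs_psd {N : ℕ} {S : Matrix (Fin N) (Fin N) ℝ} (hS : S.PosSemidef) (x y : Fin N → ℝ) :
    (x ⬝ᵥ S *ᵥ y) ^ 2 ≤ (x ⬝ᵥ S *ᵥ x) * (y ⬝ᵥ S *ᵥ y) := by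
  have key : ∀ t : ℝ, 0 ≤ (y ⬝ᵥ S *ᵥ y) * (t * t) + (2 * (x ⬝ᵥ S *ᵥ y)) * t + (x ⬝ᵥ S *ᵥ x) := by
    intro t
    have h0 := hS.dotProduct_mulVec_nonneg (x + t • y)
    have hsym := dot_mulVec_symm hS.1 x y
    simp only [star_trivial, add_dotProduct, dotProduct_add, Matrix.mulVec_add,
      smul_dotProduct, dotProduct_smul, Matrix.mulVec_smul, smul_eq_mul] at h0
    rw [hsym] at h0; nlinarith [h0]
  have h := discrim_le_zero key
  unfold discrim at h
  nlinarith [h]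

lemma inv_quad_le {N : ℕ} {S Sbar : Matrix (Fin N) (Fin N) ℝ}
    (hS : S.PosDef) (hSbar : Sbar.PosDef) (hle : (Sbar - S).PosSemidef) (μ : Fin N → ℝ) :
    μ ⬝ᵥ Sbar⁻¹ *ᵥ μ ≤ μ ⬝ᵥ S⁻¹ *ᵥ μ := by
  set x := Sbar⁻¹ *ᵥ μ with hx
  set y := S⁻¹ *ᵥ μ with hy
  have hSdet : IsUnit S.det := hS.det_pos.ne'.isUnit
  have hSbardet : IsUnit Sbar.det := hSbar.det_pos.ne'.isUnit
  have hxmu : Sbar *ᵥ x = μ := by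
    rw [hx, Matrix.mulVec_mulVec, Matrix.mul_nonsing_inv _ hSbardet, Matrix.one_mulVec]
  have hymu : S *ᵥ y = μ := by
    rw [hy, Matrix.mulVec_mulVec, Matrix.mul_nonsing_inv _ hSdet, Matrix.one_mulVec]
  have ha2 : x ⬝ᵥ Sbar *ᵥ x = μ ⬝ᵥ Sbar⁻¹ *ᵥ μ := by
    rw [hxmu]; exact dotProduct_comm _ _
  have hb2 : y ⬝ᵥ S *ᵥ y = μ ⬝ᵥ S⁻¹ *ᵥ μ := by
    rw [hymu]; exact dotProduct_comm _ _
  have hxy : x ⬝ᵥ S *ᵥ y = μ ⬝ᵥ Sbar⁻¹ *ᵥ μ := by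
    rw [hymu]; exact dotProduct_comm _ _
  have hcs := cs_psd hS.posSemidef x y
  have hmono : x ⬝ᵥ S *ᵥ x ≤ x ⬝ᵥ Sbar *ᵥ x := by
    have h0 := hle.dotProduct_mulVec_nonneg x
    simp only [star_trivial, Matrix.sub_mulVec, dotProduct_sub] at h0
    linarith
  have ha2nn : 0 ≤ μ ⬝ᵥ Sbar⁻¹ *ᵥ μ := by
    have := (hSbar.inv).posSemidef.dotProduct_mulVec_nonneg μ; simpa using this
  have hb2nn : 0 ≤ μ ⬝ᵥ S⁻¹ *ᵥ μ := by
    have := (hS.inv).posSemidef.dotProduct_mulVec_nonneg μ; simpa using this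
  rcases eq_or_lt_of_le ha2nn with h | h
  · linarith
  · have hxSx_nn : 0 ≤ x ⬝ᵥ S *ᵥ x := by have := hS.posSemidef.dotProduct_mulVec_nonneg x; simpa using this
    rw [hxy, hb2, ha2] at *
    nlinarith
lemma mulVec_ne_zero {N d : ℕ} {M : Matrix (Fin N) (Fin d) ℝ} (hM : M.rank = d)
    {v : Fin d → ℝ} (hv : v ≠ 0) : M *ᵥ v ≠ 0 := by
  have h1 := LinearMap.finrank_range_add_finrank_ker M.mulVecLin
  rw [show Module.finrank ℝ (LinearMap.range M.mulVecLin) = M.rank from rfl] at h1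
  have h2 : Module.finrank ℝ (Fin d → ℝ) = d := by simp
  rw [hM, h2] at h1
  have hker : LinearMap.ker M.mulVecLin = ⊥ := Submodule.finrank_eq_zero.mp (by omega)
  intro h
  have hmem : v ∈ LinearMap.ker M.mulVecLin := by
    rw [LinearMap.mem_ker, Matrix.mulVecLin_apply]; exact h
  rw [hker, Submodule.mem_bot] at hmem
  exact hv hmem

lemma gaussQ_anti {x y : ℝ} (h : x ≤ y) : gaussQ y ≤ gaussQ x := by
  unfold gaussQ
  apply mul_le_mul_of_nonneg_left _ (inv_nonneg.mpr (Real.sqrt_nonneg _))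
  apply setIntegral_mono_set integrable_gauss1d.integrableOn
    (Filter.Eventually.of_forall fun z => (Real.exp_pos _).le)
    (HasSubset.Subset.eventuallyLE (Set.Ioi_subset_Ioi h))

lemma dot_self_pos {N : ℕ} {v : Fin N → ℝ} (hv : v ≠ 0) : 0 < v ⬝ᵥ v := by
  have hnn : 0 ≤ v ⬝ᵥ v := Finset.sum_nonneg fun i _ => mul_self_nonneg _
  exact hnn.lt_of_ne fun h => hv (dotProduct_self_eq_zero.mp h.symm)
/-- Theorem 1 of the paper. -/
theorem gaussian_mechanism_dp {N d : ℕ}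
    (M : Matrix (Fin N) (Fin d) ℝ) (hM : M.rank = d) (c : Fin N → ℝ)
    (ε₀ ε δ : ℝ) (hε₀ : 0 < ε₀) (hε : 0 ≤ ε) (hδ : 0 ≤ δ)
    (S Sbar : Matrix (Fin N) (Fin N) ℝ) (hS : S.PosDef) (hSbar : Sbar.PosDef)
    (hle : (Sbar - S).PosSemidef)
    (hQ : ∀ d₁ d₂ : Fin d → ℝ,
      0 < Real.sqrt ((d₁ - d₂) ⬝ᵥ (d₁ - d₂)) →
      Real.sqrt ((d₁ - d₂) ⬝ᵥ (d₁ - d₂)) ≤ ε₀ →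
      gaussQ (ε / wnorm S⁻¹ (M *ᵥ (d₁ - d₂)) - wnorm S⁻¹ (M *ᵥ (d₁ - d₂)) / 2) ≤ δ) :
    ∀ d₁ d₂ : Fin d → ℝ, Real.sqrt ((d₁ - d₂) ⬝ᵥ (d₁ - d₂)) ≤ ε₀ →
      ∀ T : Set (Fin N → ℝ), MeasurableSet T →
        gaussianMeasure (M *ᵥ d₁ + c) Sbar T ≤
          ENNReal.ofReal (Real.exp ε) * gaussianMeasure (M *ᵥ d₂ + c) Sbar T +
            ENNReal.ofReal δ := by
  intro d₁ d₂ hdist T hT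
  by_cases hd : d₁ = d₂
  · subst hd
    have h1 : (1 : ENNReal) ≤ ENNReal.ofReal (Real.exp ε) := by
      rw [← ENNReal.ofReal_one]
      exact ENNReal.ofReal_le_ofReal (Real.one_le_exp hε)
    calc gaussianMeasure (M *ᵥ d₁ + c) Sbar T
        ≤ ENNReal.ofReal (Real.exp ε) * gaussianMeasure (M *ᵥ d₁ + c) Sbar T :=
          le_mul_of_one_le_left (by simp) h1
      _ ≤ _ := le_self_add
  · set v := d₁ - d₂ with hvdef
    have hv : v ≠ 0 := sub_ne_zero.mpr hd
    have hvpos : 0 < Real.sqrt (v ⬝ᵥ v) := Real.sqrt_pos.mpr (dot_self_pos hv)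
    have hQb := hQ d₁ d₂ hvpos hdist
    set μv := M *ᵥ v with hμdef
    have hμv : μv ≠ 0 := mulVec_ne_zero hM hv
    have hW : (Sbar⁻¹).PosDef := hSbar.inv
    have hWH : (Sbar⁻¹).IsHermitian := hW.1
    have ha2pos : 0 < μv ⬝ᵥ Sbar⁻¹ *ᵥ μv := by
      have := hW.dotProduct_mulVec_pos hμv; simpa using this
    set a := Real.sqrt (μv ⬝ᵥ Sbar⁻¹ *ᵥ μv) with hadef
    have ha : 0 < a := Real.sqrt_pos.mpr ha2pos
    have ha2 : a * a = μv ⬝ᵥ Sbar⁻¹ *ᵥ μv := Real.mul_self_sqrt ha2pos.le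
    have hb2pos : 0 < μv ⬝ᵥ S⁻¹ *ᵥ μv := by
      have := (hS.inv).dotProduct_mulVec_pos hμv; simpa using this
    have hb : 0 < wnorm S⁻¹ μv := Real.sqrt_pos.mpr hb2pos
    set b := wnorm S⁻¹ μv with hbdef
    have hab : a ≤ b := Real.sqrt_le_sqrt (inv_quad_le hS hSbar hle μv)
    have hQmono : gaussQ (ε / a - a / 2) ≤ δ := by
      refine le_trans (gaussQ_anti ?_) hQb
      have h1 : ε / b ≤ ε / a := by
        rw [div_le_div_iff₀ hb ha]; nlinarith
      linarith
    set m₁ := M *ᵥ d₁ + c with hm₁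
    set m₂ := M *ᵥ d₂ + c with hm₂
    have hm : m₁ - m₂ = μv := by
      rw [hm₁, hm₂, hμdef, hvdef, Matrix.mulVec_sub]; abel
    set w := Sbar⁻¹ *ᵥ μv with hwdef
    have hSbarUnit : IsUnit Sbar.det := hSbar.det_pos.ne'.isUnit
    have hwne : w ≠ 0 := by
      intro h
      apply hμv
      have h2 : Sbar *ᵥ w = Sbar *ᵥ 0 := by rw [h]
      rwa [hwdef, Matrix.mulVec_mulVec, Matrix.mul_nonsing_inv _ hSbarUnit,
        Matrix.one_mulVec, Matrix.mulVec_zero] at h2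
    have hwSw : w ⬝ᵥ Sbar *ᵥ w = μv ⬝ᵥ Sbar⁻¹ *ᵥ μv := by
      have h1 : Sbar *ᵥ w = μv := by
        rw [hwdef, Matrix.mulVec_mulVec, Matrix.mul_nonsing_inv _ hSbarUnit,
          Matrix.one_mulVec]
      rw [h1, hwdef]
      exact dotProduct_comm _ _
    set t := ε - (a * a) / 2 with htdef
    set B := {u : Fin N → ℝ | t < w ⬝ᵥ (u - m₁)} with hBdef
    have hBmeas : MeasurableSet B :=
      measurableSet_lt measurable_const (measurable_linform w m₁)
    have hta : t / a = ε / a - a / 2 := by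
      rw [htdef, sub_div]
      congr 1
      rw [div_div, mul_comm (2:ℝ) a, ← div_div, mul_div_cancel_right₀ _ (ne_of_gt ha)]
    have hBmeasure : gaussianMeasure m₁ Sbar B = ENNReal.ofReal (gaussQ (ε / a - a / 2)) := by
      rw [gaussianMeasure, withDensity_apply _ hBmeas, ← lintegral_indicator hBmeas _,
        halfspace_lintegral m₁ hSbar hwne t, hwSw, ← hwdef, ← hadef, hta]
    have hpdf_le : ∀ u, u ∉ B → gaussianPdf m₁ Sbar u ≤ Real.exp ε * gaussianPdf m₂ Sbar u := by
      intro u hu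
      have hs : w ⬝ᵥ (u - m₁) ≤ t := not_lt.mp hu
      set z := u - m₁ with hz
      have hum₂ : u - m₂ = z + μv := by rw [hz, ← hm]; abel
      have h1 : μv ⬝ᵥ Sbar⁻¹ *ᵥ z = w ⬝ᵥ z := by
        rw [← dot_mulVec_symm hWH μv z, ← hwdef]
        exact dotProduct_comm _ _
      have h2 : z ⬝ᵥ Sbar⁻¹ *ᵥ μv = w ⬝ᵥ z := by
        rw [← hwdef]
        exact dotProduct_comm _ _
      have hq : (u - m₂) ⬝ᵥ Sbar⁻¹ *ᵥ (u - m₂)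
          = z ⬝ᵥ Sbar⁻¹ *ᵥ z + 2 * (w ⬝ᵥ z) + μv ⬝ᵥ w := by
        rw [hum₂]
        simp only [add_dotProduct, dotProduct_add, Matrix.mulVec_add]
        rw [h1, h2, ← hwdef]
        ring
      unfold gaussianPdf
      have hKnn : (0:ℝ) ≤ (Real.sqrt ((2 * Real.pi) ^ N * Sbar.det))⁻¹ :=
        inv_nonneg.mpr (Real.sqrt_nonneg _)
      have h3 : Real.exp (-(1/2) * (z ⬝ᵥ Sbar⁻¹ *ᵥ z))
          ≤ Real.exp ε * Real.exp (-(1/2) * ((u - m₂) ⬝ᵥ Sbar⁻¹ *ᵥ (u - m₂))) := by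
        rw [← Real.exp_add]
        apply Real.exp_le_exp.mpr
        have hs' : w ⬝ᵥ z ≤ ε - a * a / 2 := htdef ▸ hs
        rw [hq, ← ha2]
        linarith [hs']
      calc (Real.sqrt ((2 * Real.pi) ^ N * Sbar.det))⁻¹ *
            Real.exp (-(1/2) * ((u - m₁) ⬝ᵥ Sbar⁻¹ *ᵥ (u - m₁)))
          ≤ (Real.sqrt ((2 * Real.pi) ^ N * Sbar.det))⁻¹ *
            (Real.exp ε * Real.exp (-(1/2) * ((u - m₂) ⬝ᵥ Sbar⁻¹ *ᵥ (u - m₂)))) := by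
            rw [← hz]
            exact mul_le_mul_of_nonneg_left h3 hKnn
        _ = Real.exp ε * ((Real.sqrt ((2 * Real.pi) ^ N * Sbar.det))⁻¹ *
            Real.exp (-(1/2) * ((u - m₂) ⬝ᵥ Sbar⁻¹ *ᵥ (u - m₂)))) := by ring
    have hf₂meas : Measurable fun u => ENNReal.ofReal (gaussianPdf m₂ Sbar u) :=
      (measurable_gaussianPdf m₂ Sbar).ennreal_ofReal
    calc gaussianMeasure m₁ Sbar T
        = ∫⁻ u in T, ENNReal.ofReal (gaussianPdf m₁ Sbar u) := withDensity_apply _ hT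
      _ ≤ (∫⁻ u in T ∩ B, ENNReal.ofReal (gaussianPdf m₁ Sbar u)) +
          ∫⁻ u in T \ B, ENNReal.ofReal (gaussianPdf m₁ Sbar u) := by
          conv_lhs => rw [← Set.inter_union_diff T B]
          exact lintegral_union_le _ _ _
      _ ≤ (ENNReal.ofReal (Real.exp ε) *
            ∫⁻ u in T, ENNReal.ofReal (gaussianPdf m₂ Sbar u)) + ENNReal.ofReal δ := by
          rw [add_comm (ENNReal.ofReal (Real.exp ε) * _)]
          apply add_le_add
          · calc (∫⁻ u in T ∩ B, ENNReal.ofReal (gaussianPdf m₁ Sbar u))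
                ≤ ∫⁻ u in B, ENNReal.ofReal (gaussianPdf m₁ Sbar u) :=
                  lintegral_mono_set Set.inter_subset_right
              _ = gaussianMeasure m₁ Sbar B := (withDensity_apply _ hBmeas).symm
              _ = ENNReal.ofReal (gaussQ (ε / a - a / 2)) := hBmeasure
              _ ≤ ENNReal.ofReal δ := ENNReal.ofReal_le_ofReal hQmono
          · calc (∫⁻ u in T \ B, ENNReal.ofReal (gaussianPdf m₁ Sbar u))
                ≤ ∫⁻ u in T \ B,
                    ENNReal.ofReal (Real.exp ε) * ENNReal.ofReal (gaussianPdf m₂ Sbar u) := by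
                  apply setLIntegral_mono (hf₂meas.const_mul _)
                  intro u hu
                  rw [← ENNReal.ofReal_mul (Real.exp_pos ε).le]
                  exact ENNReal.ofReal_le_ofReal (hpdf_le u hu.2)
              _ = ENNReal.ofReal (Real.exp ε) *
                  ∫⁻ u in T \ B, ENNReal.ofReal (gaussianPdf m₂ Sbar u) :=
                  lintegral_const_mul' _ _ ENNReal.ofReal_ne_top
              _ ≤ ENNReal.ofReal (Real.exp ε) *
                  ∫⁻ u in T, ENNReal.ofReal (gaussianPdf m₂ Sbar u) :=
                  mul_le_mul_right (lintegral_mono_set Set.diff_subset) _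
      _ = ENNReal.ofReal (Real.exp ε) * gaussianMeasure m₂ Sbar T + ENNReal.ofReal δ := by
          rw [gaussianMeasure, withDensity_apply _ hT]
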